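/- Let A be a d × n real matrix, b ∈ ℝ^d, c ∈ ℝ^n, and let x ∈ ℝ^n satisfy A x ≤ b. Then x maximizes c^T x over {x' ∈ ℝ^n : A x' ≤ b} (i.e., c^T x' ≤ c^T x for all x' with A x' ≤ b) if and only if there exists y ∈ ℝ^d with y ≥ 0, A^T y = c, and b^T y ≤ c^T x. -/

import Mathlib

open Matrix Finset
open scoped InnerProductSpace

section Cone

variable {H : Type*} [NormedAddCommGroup H] [InnerProductSpace ℝ H] [FiniteDimensional ℝ H]
variable {m : ℕ}

open Classical in
/-- Conic Carathéodory: any nonnegative combination equals a nonnegative combination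
supported on a linearly independent subset. -/
lemma cone_cara (v : Fin m → H) :
    ∀ (k : ℕ) (s : Finset (Fin m)) (y : Fin m → ℝ), 0 ≤ y → (∀ i ∉ s, y i = 0) →
      s.card ≤ k →
      ∃ (t : Finset (Fin m)) (z : Fin m → ℝ),
        LinearIndependent ℝ (fun i : t => v (i : Fin m)) ∧ 0 ≤ z ∧ (∀ i ∉ t, z i = 0) ∧
        ∑ i, z i • v i = ∑ i, y i • v i := by
  intro k
  induction k with
  | zero =>
    intro s y hy hy0 hcard
    have hs : s = ∅ := Finset.card_eq_zero.mp (Nat.le_antisymm hcard (Nat.zero_le _))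
    subst hs
    haveI : IsEmpty ((∅ : Finset (Fin m)) : Type) := Finset.isEmpty_coe_sort.mpr rfl
    exact ⟨∅, y, linearIndependent_empty_type, hy, fun i _ => hy0 i (by simp), rfl⟩
  | succ k ih =>
    intro s y hy hy0 hcard
    by_cases hli : LinearIndependent ℝ (fun i : s => v (i : Fin m))
    · exact ⟨s, y, hli, hy, hy0, rfl⟩
    · -- get a vanishing combination supported on s
      rw [Fintype.not_linearIndependent_iff] at hli
      obtain ⟨g, hg, ⟨i₁, hi₁⟩⟩ := hli
      have key : ∀ c : Fin m → ℝ, (∀ i ∉ s, c i = 0) → (∑ i, c i • v i) = 0 →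
          (∃ i ∈ s, 0 < c i) →
          ∃ (t : Finset (Fin m)) (z : Fin m → ℝ),
            LinearIndependent ℝ (fun i : t => v (i : Fin m)) ∧ 0 ≤ z ∧
            (∀ i ∉ t, z i = 0) ∧ ∑ i, z i • v i = ∑ i, y i • v i := by
        intro c hc0 hcs hcpos
        set T : Finset (Fin m) := s.filter (fun i => 0 < c i) with hT
        have hTne : T.Nonempty := by
          obtain ⟨i, his, hip⟩ := hcpos
          exact ⟨i, Finset.mem_filter.mpr ⟨his, hip⟩⟩
        obtain ⟨i₀, hi₀T, hi₀min⟩ := Finset.exists_min_image T (fun i => y i / c i) hTne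
        have hi₀s : i₀ ∈ s := (Finset.mem_filter.mp hi₀T).1
        have hci₀ : 0 < c i₀ := (Finset.mem_filter.mp hi₀T).2
        set t : ℝ := y i₀ / c i₀ with ht
        have ht0 : 0 ≤ t := div_nonneg (hy i₀) hci₀.le
        set y' : Fin m → ℝ := fun i => y i - t * c i with hy'
        have hy'0 : 0 ≤ y' := by
          intro i
          simp only [hy', Pi.zero_apply, sub_nonneg]
          rcases le_or_gt (c i) 0 with hci | hci
          · calc t * c i ≤ 0 := mul_nonpos_of_nonneg_of_nonpos ht0 hci
              _ ≤ y i := hy i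
          · by_cases his : i ∈ s
            · have hiT : i ∈ T := Finset.mem_filter.mpr ⟨his, hci⟩
              have := hi₀min i hiT
              calc t * c i ≤ (y i / c i) * c i :=
                    mul_le_mul_of_nonneg_right this hci.le
                _ = y i := div_mul_cancel₀ _ hci.ne'
            · rw [hy0 i his, hc0 i his, mul_zero]
        have hy'i₀ : y' i₀ = 0 := by
          simp only [hy', ht, div_mul_cancel₀ _ hci₀.ne', sub_self]
        have hsupp : ∀ i ∉ s.erase i₀, y' i = 0 := by
          intro i hi
          rcases eq_or_ne i i₀ with rfl | h
          · exact hy'i₀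
          · have his : i ∉ s := fun hs' => hi (Finset.mem_erase.mpr ⟨h, hs'⟩)
            simp only [hy', hy0 i his, hc0 i his, mul_zero, sub_zero]
        have hcard' : (s.erase i₀).card ≤ k := by
          have := Finset.card_erase_of_mem hi₀s
          omega
        have hsum' : ∑ i, y' i • v i = ∑ i, y i • v i := by
          have htc : ∑ i, (t * c i) • v i = t • ∑ i, c i • v i := by
            rw [Finset.smul_sum]
            exact Finset.sum_congr rfl fun i _ => mul_smul t (c i) (v i)
          simp only [hy', sub_smul, Finset.sum_sub_distrib, htc, hcs, smul_zero, sub_zero]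
        obtain ⟨t', z, h1, h2, h3, h4⟩ := ih (s.erase i₀) y' hy'0 hsupp hcard'
        exact ⟨t', z, h1, h2, h3, h4.trans hsum'⟩
      -- extend g to a combination on Fin m
      set c : Fin m → ℝ := fun i => if h : i ∈ s then g ⟨i, h⟩ else 0 with hc
      have hc0 : ∀ i ∉ s, c i = 0 := fun i hi => by simp [hc, hi]
      have hcs : ∑ i, c i • v i = 0 := by
        rw [← Finset.sum_subset (Finset.subset_univ s)
          (fun i _ hi => by rw [hc0 i hi, zero_smul])]
        rw [← Finset.sum_coe_sort s (fun i => c i • v i)]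
        rw [← hg]
        refine Finset.sum_congr rfl fun i _ => ?_
        simp [hc, i.2]
      have hc1 : c i₁ = g i₁ := by simp [hc, i₁.2]
      rcases lt_or_gt_of_ne hi₁ with hneg | hpos
      · refine key (-c) (fun i hi => by simp [hc0 i hi]) (by simp [hcs]) ?_
        exact ⟨i₁, i₁.2, by simp only [Pi.neg_apply]; rw [hc1]; linarith⟩
      · exact key c hc0 hcs ⟨i₁, i₁.2, by rw [hc1]; exact hpos⟩

/-- The cone generated by a linearly independent subfamily is closed. -/
lemma piece_closed (v : Fin m → H) (s : Finset (Fin m))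
    (hs : LinearIndependent ℝ (fun i : s => v (i : Fin m))) :
    IsClosed {x : H | ∃ w : s → ℝ, (∀ i, 0 ≤ w i) ∧ x = ∑ i, w i • v (i : Fin m)} := by
  set b : s → H := fun i => v (i : Fin m) with hb
  set W : Submodule ℝ H := Submodule.span ℝ (Set.range b) with hW
  set B : Module.Basis s ℝ W := Module.Basis.span hs with hB
  have hBa : ∀ i, (B i : H) = b i := fun i => congrArg Subtype.val (Module.Basis.span_apply hs i)
  have hset : {x : H | ∃ w : s → ℝ, (∀ i, 0 ≤ w i) ∧ x = ∑ i, w i • v (i : Fin m)}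
      = Subtype.val '' {u : W | ∀ i, 0 ≤ B.repr u i} := by
    ext x
    constructor
    · rintro ⟨w, hw, rfl⟩
      refine ⟨∑ i, w i • B i, fun i => ?_, ?_⟩
      · rw [Module.Basis.repr_sum_self]; exact hw i
      · push_cast
        exact Finset.sum_congr rfl fun i _ => by rw [hBa]
    · rintro ⟨u, hu, rfl⟩
      refine ⟨fun i => B.repr u i, hu, ?_⟩
      conv_lhs => rw [← B.sum_repr u]
      push_cast
      exact Finset.sum_congr rfl fun i _ => by rw [hBa]
  rw [hset]
  have hWc : IsClosed (W : Set H) := Submodule.closed_of_finiteDimensional W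
  apply hWc.isClosedEmbedding_subtypeVal.isClosedMap
  have : {u : W | ∀ i, 0 ≤ B.repr u i} = ⋂ i, (fun u : W => B.repr u i) ⁻¹' Set.Ici 0 := by
    ext u; simp [Set.mem_iInter]
  rw [this]
  refine isClosed_iInter fun i => IsClosed.preimage ?_ isClosed_Ici
  exact LinearMap.continuous_of_finiteDimensional
    ((Finsupp.lapply i).comp (B.repr : W →ₗ[ℝ] (s →₀ ℝ)))

open Classical in
/-- A finitely generated cone is closed. -/
lemma cone_closed (v : Fin m → H) :
    IsClosed {x : H | ∃ y : Fin m → ℝ, 0 ≤ y ∧ x = ∑ i, y i • v i} := by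
  have hset : {x : H | ∃ y : Fin m → ℝ, 0 ≤ y ∧ x = ∑ i, y i • v i}
      = ⋃ s ∈ {s : Finset (Fin m) | LinearIndependent ℝ (fun i : s => v (i : Fin m))},
          {x : H | ∃ w : s → ℝ, (∀ i, 0 ≤ w i) ∧ x = ∑ i, w i • v (i : Fin m)} := by
    ext x
    simp only [Set.mem_iUnion, Set.mem_setOf_eq]
    constructor
    · rintro ⟨y, hy, rfl⟩
      obtain ⟨t, z, h1, h2, h3, h4⟩ :=
        cone_cara v ((Finset.univ.filter (fun i => y i ≠ 0)).card)
          (Finset.univ.filter (fun i => y i ≠ 0)) y hy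
          (fun i hi => by simpa using (by simpa using hi : ¬ y i ≠ 0)) le_rfl
      refine ⟨t, h1, fun i => z i, fun i => h2 i, ?_⟩
      rw [← h4, ← Finset.sum_subset (Finset.subset_univ t)
        (fun i _ hi => by rw [h3 i hi, zero_smul])]
      exact (Finset.sum_coe_sort t (fun i => z i • v i)).symm
    · rintro ⟨s, _, w, hw, rfl⟩
      refine ⟨fun i => if h : i ∈ s then w ⟨i, h⟩ else 0, fun i => by dsimp; split <;> simp [hw _], ?_⟩
      rw [← Finset.sum_subset (Finset.subset_univ s)
        (fun i _ hi => by simp [hi]), ← Finset.sum_coe_sort s]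
      exact (Finset.sum_congr rfl fun i _ => by simp [i.2]).symm
  rw [hset]
  exact Set.Finite.isClosed_biUnion (Set.toFinite _) fun s hs => piece_closed v s hs

open scoped InnerProductSpace in
/-- Farkas' lemma. -/
lemma farkas_cone {k : ℕ} (u : Fin k → H) (g : H)
    (h : ∀ p : H, (∀ i, 0 ≤ ⟪u i, p⟫_ℝ) → 0 ≤ ⟪g, p⟫_ℝ) :
    ∃ y : Fin k → ℝ, 0 ≤ y ∧ ∑ i, y i • u i = g := by
  by_contra hg
  set K : ConvexCone ℝ H :=
    { carrier := {x : H | ∃ y : Fin k → ℝ, 0 ≤ y ∧ x = ∑ i, y i • u i}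
      smul_mem' := by
        rintro t ht x ⟨y, hy, rfl⟩
        refine ⟨t • y, fun i => mul_nonneg ht.le (hy i), ?_⟩
        rw [Finset.smul_sum]
        exact Finset.sum_congr rfl fun i _ => by
          rw [Pi.smul_apply, smul_eq_mul, mul_smul]
      add_mem' := by
        rintro x ⟨y, hy, rfl⟩ x' ⟨y', hy', rfl⟩
        exact ⟨y + y', fun i => add_nonneg (hy i) (hy' i),
          by rw [← Finset.sum_add_distrib]; exact Finset.sum_congr rfl fun i _ => (add_smul _ _ _).symm⟩ }
    with hK
  have hne : (K : Set H).Nonempty := ⟨0, ⟨0, le_rfl, by simp⟩⟩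
  have hcl : IsClosed (K : Set H) := cone_closed u
  have hgK : g ∉ K := by
    intro ⟨y, hy, hyg⟩
    exact hg ⟨y, hy, hyg.symm⟩
  obtain ⟨p, hp1, hp2⟩ :=
    ProperCone.hyperplane_separation'
      ({ carrier := (K : Set H)
         add_mem' := fun ha hb => K.add_mem ha hb
         zero_mem' := ⟨0, le_rfl, by simp⟩
         smul_mem' := by
           rintro c x ⟨y, hy, rfl⟩
           refine ⟨(c : ℝ) • y, fun i => mul_nonneg c.2 (hy i), ?_⟩
           show (c : ℝ) • ∑ i, y i • u i = _
           rw [Finset.smul_sum]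
           exact Finset.sum_congr rfl fun i _ => by
             rw [Pi.smul_apply, smul_eq_mul, mul_smul]
         isClosed' := hcl } : ProperCone ℝ H) hgK
  have hui : ∀ i, u i ∈ K := by
    intro i
    refine ⟨fun j => if j = i then 1 else 0, fun j => by dsimp; split <;> norm_num, ?_⟩
    simp [ite_smul]
  have := h p (fun i => hp1 (u i) (hui i))
  rw [real_inner_comm] at this hp2
  linarith

end Cone

lemma euc_sum_apply {k m : ℕ} (q : Fin k → EuclideanSpace ℝ (Fin m)) (j : Fin m) :
    (∑ i, q i) j = ∑ i, q i j :=
  by rw [WithLp.ofLp_sum]; exact Finset.sum_apply _ _ _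

lemma euc_inner {m : ℕ} (a p : EuclideanSpace ℝ (Fin m)) :
    ⟪a, p⟫_ℝ = ∑ i, a i * p i := by
  simp [PiLp.inner_apply, RCLike.inner_apply, conj_trivial]
  exact Finset.sum_congr rfl fun i _ => mul_comm _ _

/-- KKT/duality: a feasible `x` (i.e. `A x ≤ b`) maximizes `c^T x'` over `{x' : A x' ≤ b}` iff
there is `y ≥ 0` with `Aᵀ y = c` and `bᵀ y ≤ cᵀ x`. -/
theorem stmt_10 (d n : ℕ) (A : Matrix (Fin d) (Fin n) ℝ) (b : Fin d → ℝ) (c : Fin n → ℝ)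
    (x : Fin n → ℝ) (hx : A.mulVec x ≤ b) :
    (∀ x' : Fin n → ℝ, A.mulVec x' ≤ b → c ⬝ᵥ x' ≤ c ⬝ᵥ x) ↔
      ∃ y : Fin d → ℝ, 0 ≤ y ∧ Aᵀ.mulVec y = c ∧ b ⬝ᵥ y ≤ c ⬝ᵥ x := by
  constructor
  · intro hopt
    set γ : ℝ := c ⬝ᵥ x with hγ
    set u : Fin (d + 1) → EuclideanSpace ℝ (Fin (n + 1)) :=
      Fin.snoc (fun i => WithLp.toLp 2 (Fin.snoc (A i) (b i) : Fin (n + 1) → ℝ))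
        (WithLp.toLp 2 (Fin.snoc 0 1 : Fin (n + 1) → ℝ)) with hu
    set g : EuclideanSpace ℝ (Fin (n + 1)) := WithLp.toLp 2 (Fin.snoc c γ : Fin (n + 1) → ℝ) with hgdef
    have hfar : ∀ p : EuclideanSpace ℝ (Fin (n + 1)),
        (∀ i, 0 ≤ ⟪u i, p⟫_ℝ) → 0 ≤ ⟪g, p⟫_ℝ := by
      intro p hp
      set ξ : Fin n → ℝ := fun j => p j.castSucc with hξ
      set τ : ℝ := p (Fin.last n) with hτdef
      have hτ : 0 ≤ τ := by
        have := hp (Fin.last d)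
        rw [euc_inner, Fin.sum_univ_castSucc] at this
        simpa [hu] using this
      have hrow : ∀ i : Fin d, 0 ≤ A i ⬝ᵥ ξ + b i * τ := by
        intro i
        have := hp i.castSucc
        rw [euc_inner, Fin.sum_univ_castSucc] at this
        simpa [hu, dotProduct] using this
      have hgoal : (⟪g, p⟫_ℝ : ℝ) = c ⬝ᵥ ξ + γ * τ := by
        rw [euc_inner, Fin.sum_univ_castSucc]
        simp [hgdef, dotProduct]; rfl
      rw [hgoal]
      rcases eq_or_lt_of_le hτ with hτ0 | hτpos
      · -- τ = 0 : use feasibility of x - ξ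
        have hfeas : A.mulVec (x - ξ) ≤ b := by
          intro i
          have h1 := hrow i
          rw [← hτ0, mul_zero, add_zero] at h1
          have h2 : A.mulVec (x - ξ) i = A.mulVec x i - A i ⬝ᵥ ξ := by
            rw [Matrix.mulVec_sub]; rfl
          have h3 := hx i
          rw [h2]
          linarith
        have := hopt (x - ξ) hfeas
        rw [dotProduct_sub] at this
        rw [← hτ0]
        simp only [mul_zero, add_zero]
        linarith
      · -- τ > 0 : use feasibility of (-τ⁻¹) • ξ
        have hfeas : A.mulVec ((-τ⁻¹) • ξ) ≤ b := by
          intro i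
          have h1 := hrow i
          have h2 : A.mulVec ((-τ⁻¹) • ξ) i = (-τ⁻¹) * (A i ⬝ᵥ ξ) := by
            rw [Matrix.mulVec_smul]
            simp [Matrix.mulVec]
          rw [h2]
          have key : 0 ≤ τ⁻¹ * (A i ⬝ᵥ ξ + b i * τ) := mul_nonneg (inv_nonneg.mpr hτ) h1
          rw [mul_add, mul_comm (b i) τ, ← mul_assoc, inv_mul_cancel₀ hτpos.ne', one_mul] at key
          linarith
        have hval := hopt ((-τ⁻¹) • ξ) hfeas
        have h3 : c ⬝ᵥ ((-τ⁻¹) • ξ) = (-τ⁻¹) * (c ⬝ᵥ ξ) := by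
          simp [dotProduct, Finset.mul_sum]
          exact Finset.sum_congr rfl fun i _ => by ring
        rw [h3] at hval
        have h4 := mul_le_mul_of_nonneg_right hval hτ
        have h5 : -τ⁻¹ * (c ⬝ᵥ ξ) * τ = -(c ⬝ᵥ ξ) := by
          field_simp
        rw [h5] at h4
        linarith
    obtain ⟨y', hy', hsum⟩ := farkas_cone u g hfar
    -- extract the dual certificate
    have hcoord : ∀ j : Fin (n + 1), (∑ i, y' i * u i j) = g j := by
      intro j
      have h1 : (∑ i, y' i • u i) j = g j := congrArg (fun w => w j) hsum
      rw [euc_sum_apply] at h1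
      exact h1
    refine ⟨fun i => y' i.castSucc, fun i => hy' i.castSucc, ?_, ?_⟩
    · funext j
      have := hcoord j.castSucc
      rw [Fin.sum_univ_castSucc] at this
      simp only [hu, hgdef, Fin.snoc_castSucc, Fin.snoc_last, PiLp.toLp_apply, Pi.zero_apply, mul_zero,
        add_zero] at this
      rw [Matrix.mulVec, ← this]
      exact Finset.sum_congr rfl fun i _ => by
        simp only [Matrix.transpose_apply]; ring
    · have := hcoord (Fin.last n)
      rw [Fin.sum_univ_castSucc] at this
      simp only [hu, hgdef, Fin.snoc_castSucc, Fin.snoc_last, PiLp.toLp_apply, mul_one] at this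
      have hlast : 0 ≤ y' (Fin.last d) := hy' (Fin.last d)
      have hbdot : b ⬝ᵥ (fun i => y' i.castSucc) = ∑ i : Fin d, y' i.castSucc * b i :=
        Finset.sum_congr rfl fun i _ => mul_comm _ _
      rw [hbdot]
      linarith
  · -- easy direction: weak duality
    rintro ⟨y, hy, hAty, hby⟩ x' hx'
    have h1 : c ⬝ᵥ x' = y ⬝ᵥ A.mulVec x' := by
      rw [← hAty, Matrix.mulVec_transpose, Matrix.dotProduct_mulVec]
    have h2 : y ⬝ᵥ A.mulVec x' ≤ y ⬝ᵥ b := by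
      refine Finset.sum_le_sum fun i _ => ?_
      exact mul_le_mul_of_nonneg_left (hx' i) (hy i)
    have h3 : y ⬝ᵥ b = b ⬝ᵥ y := dotProduct_comm y b
    linarith
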